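/- Harmonic (stuffle) product relation for multiple zeta values: let R be the free ℚ-vector space on the set of indices, and let * : R × R → R be the ℚ-bilinear product determined recursively by ∅ * k = k * ∅ = k and (k⌢a) * (l⌢b) = ((k⌢a) * l)⌢b + (k * (l⌢b))⌢a + (k * l)⌢(a+b), where k⌢a denotes the index obtained by appending the positive integer a to the index k (and ⌢ is extended linearly). Then for all admissible indices k and l, every index appearing in k * l is admissible, and ζ(k * l) = ζ(k)·ζ(l), where ζ is extended ℚ-linearly to the span of admissible indices. -/

import Mathlib

/- STATEMENT 13: the harmonic (stuffle) relation ζ(k * l) = ζ(k)ζ(l) for admissible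
indices, where * is the ℚ-bilinear stuffle product on the free ℚ-vector space on indices. -/

noncomputable section

/-- The multiple zeta value of an index (as a `tsum`, which equals the sum of the
convergent series when the index is admissible). -/
def mzv (k : List ℕ) : ℝ :=
  ∑' n : {f : Fin k.length → ℕ // StrictMono f ∧ ∀ i, 0 < f i},
    ∏ i, ((n.1 i : ℝ) ^ k.get i)⁻¹

/-- Multiple zeta value of an index of positive integers. -/
def mzvP (k : List ℕ+) : ℝ := mzv (k.map fun a => (a : ℕ))

/-- An index is admissible if it is empty or its last entry is ≥ 2. -/
def Admissible (k : List ℕ+) : Prop := ∀ a : ℕ+, k.getLast? = some a → 2 ≤ a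

/-- The free ℚ-vector space on the set of indices. -/
abbrev R : Type := List ℕ+ →₀ ℚ

/-- Basis vector of the free ℚ-vector space on indices. -/
def δ (k : List ℕ+) : R := Finsupp.single k 1

/-- Linear extension of appending the entry `a` to an index. -/
def appendOp (a : ℕ+) : R →ₗ[ℚ] R := Finsupp.lmapDomain ℚ ℚ (fun l => l ++ [a])

namespace S13

def gF {r : ℕ} (e : Fin r → ℕ) (f : Fin r → ℕ) : ℝ := ∏ i, ((f i : ℝ) ^ e i)⁻¹

def AF (r N : ℕ) : Finset (Fin r → ℕ) :=
  (Fintype.piFinset fun _ => Finset.Icc 1 N).filter fun f => StrictMono f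

lemma mem_AF {r N : ℕ} {f : Fin r → ℕ} :
    f ∈ AF r N ↔ (∀ i, 1 ≤ f i ∧ f i ≤ N) ∧ StrictMono f := by
  simp [AF, Fintype.mem_piFinset]

def g (k : List ℕ+) (f : Fin k.length → ℕ) : ℝ := ∏ i, ((f i : ℝ) ^ (k.get i : ℕ))⁻¹

def A (k : List ℕ+) (N : ℕ) : Finset (Fin k.length → ℕ) := AF k.length N

lemma mem_A {k : List ℕ+} {N : ℕ} {f : Fin k.length → ℕ} :
    f ∈ A k N ↔ (∀ i, 1 ≤ f i ∧ f i ≤ N) ∧ StrictMono f := mem_AF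

def H' : ℕ → List ℕ+ → ℝ
  | _, [] => 1
  | N, a :: ρ => ∑ n ∈ Finset.Icc 1 N, ((n:ℝ) ^ (a:ℕ))⁻¹ * H' (n-1) ρ

def Hl (N : ℕ) (k : List ℕ+) : ℝ := H' N k.reverse

lemma Hl_nil (N : ℕ) : Hl N [] = 1 := rfl

lemma Hl_concat (N : ℕ) (k : List ℕ+) (a : ℕ+) :
    Hl N (k ++ [a]) = ∑ n ∈ Finset.Icc 1 N, ((n:ℝ) ^ (a:ℕ))⁻¹ * Hl (n-1) k := by
  simp [Hl, H', List.reverse_append]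

lemma concat_sumF (r : ℕ) (e : Fin (r+1) → ℕ) (N : ℕ) :
    ∑ f ∈ AF (r+1) N, gF e f
      = ∑ n ∈ Finset.Icc 1 N, ((n:ℝ) ^ (e (Fin.last r)))⁻¹ *
          ∑ u ∈ AF r (n-1), gF (e ∘ Fin.castSucc) u := by
  classical
  have hmaps : ∀ f ∈ AF (r+1) N, f (Fin.last r) ∈ Finset.Icc 1 N := by
    intro f hf
    rcases mem_AF.1 hf with ⟨hmem, _⟩
    simpa using hmem (Fin.last r)
  rw [← Finset.sum_fiberwise_of_maps_to hmaps (gF e)]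
  refine Finset.sum_congr rfl fun n hn => ?_
  rw [Finset.mul_sum]
  simp only [Finset.mem_Icc] at hn
  refine Finset.sum_nbij' (i := fun f (j : Fin r) => f j.castSucc)
    (j := fun (u : Fin r → ℕ) => (Fin.snoc u n : Fin (r+1) → ℕ)) ?_ ?_ ?_ ?_ ?_
  · intro f hf
    rw [Finset.mem_filter] at hf
    rcases mem_AF.1 hf.1 with ⟨hmem, hsm⟩
    refine mem_AF.2 ⟨fun j => ?_, ?_⟩
    · show 1 ≤ f j.castSucc ∧ f j.castSucc ≤ n - 1
      have hlt : f j.castSucc < f (Fin.last r) := hsm (Fin.castSucc_lt_last j)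
      have h2 : f (Fin.last r) = n := hf.2
      exact ⟨(hmem j.castSucc).1, by omega⟩
    · exact fun i j hij => hsm (Fin.castSucc_lt_castSucc_iff.mpr hij)
  · intro u hu
    rcases mem_AF.1 hu with ⟨hmem, hsm⟩
    have hub : ∀ j, u j < n := fun j => by have := (hmem j).2; omega
    rw [Finset.mem_filter]
    refine ⟨mem_AF.2 ⟨fun i => ?_, ?_⟩, by simp⟩
    · rcases Fin.eq_castSucc_or_eq_last i with ⟨j, hj⟩ | hj
      · rw [hj]; simp only [Fin.snoc_castSucc]
        exact ⟨(hmem j).1, by have := (hmem j).2; omega⟩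
      · rw [hj]; simp only [Fin.snoc_last]; omega
    · intro i i' hii'
      rcases Fin.eq_castSucc_or_eq_last i' with ⟨j', hj'⟩ | hj'
      · rcases Fin.eq_castSucc_or_eq_last i with ⟨j, hj⟩ | hj
        · rw [hj, hj']; simp only [Fin.snoc_castSucc]
          apply hsm
          rw [hj, hj'] at hii'
          simpa using hii'
        · exfalso
          rw [hj, hj'] at hii'
          exact absurd (lt_trans hii' (Fin.castSucc_lt_last j')) (lt_irrefl _)
      · rw [hj']; simp only [Fin.snoc_last]
        rcases Fin.eq_castSucc_or_eq_last i with ⟨j, hj⟩ | hj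
        · rw [hj]; simp only [Fin.snoc_castSucc]; exact hub j
        · exfalso; rw [hj, hj'] at hii'; exact lt_irrefl _ hii'
  · intro f hf
    rw [Finset.mem_filter] at hf
    funext i
    rcases Fin.eq_castSucc_or_eq_last i with ⟨j, hj⟩ | hj
    · rw [hj]; simp only [Fin.snoc_castSucc]
    · have h2 : f (Fin.last r) = n := hf.2
      rw [hj]; simp only [Fin.snoc_last]; rw [h2]
  · intro u hu
    funext j
    simp only [Fin.snoc_castSucc]
  · intro f hf
    rw [Finset.mem_filter] at hf
    have h2 : f (Fin.last r) = n := hf.2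
    rw [gF, Fin.prod_univ_castSucc, mul_comm]
    congr 1
    rw [h2]

lemma sum_A_eq (k : List ℕ+) {r : ℕ} (h : k.length = r) (e : Fin r → ℕ)
    (he : ∀ i : Fin k.length, (k.get i : ℕ) = e (Fin.cast h i)) (N : ℕ) :
    ∑ f ∈ A k N, g k f = ∑ f ∈ AF r N, gF e f := by
  subst h
  refine Finset.sum_congr rfl fun f hf => ?_
  refine Finset.prod_congr rfl fun i _ => ?_
  rw [he i]
  rfl

lemma concat_sum (k : List ℕ+) (a : ℕ+) (N : ℕ) :
    ∑ f ∈ A (k ++ [a]) N, g (k ++ [a]) f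
      = ∑ n ∈ Finset.Icc 1 N, ((n:ℝ) ^ (a:ℕ))⁻¹ * ∑ u ∈ A k (n-1), g k u := by
  have h : (k ++ [a]).length = k.length + 1 := by simp
  set e : Fin (k.length + 1) → ℕ := Fin.snoc (fun i => (k.get i : ℕ)) (a : ℕ) with he
  have htr : ∀ i : Fin (k ++ [a]).length, ((k ++ [a]).get i : ℕ) = e (Fin.cast h i) := by
    intro i
    rcases Fin.eq_castSucc_or_eq_last (Fin.cast h i) with ⟨j, hj⟩ | hj
    · rw [hj, he, Fin.snoc_castSucc]
      have hij : (i : ℕ) = (j : ℕ) := by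
        have := congrArg Fin.val hj
        simpa using this
      have hjlt : (j : ℕ) < k.length := j.2
      rw [List.get_eq_getElem, List.get_eq_getElem]
      congr 1
      rw [List.getElem_append_left (by omega)]
      congr 1
    · rw [hj, he, Fin.snoc_last]
      have hij : (i : ℕ) = k.length := by
        have := congrArg Fin.val hj
        simpa using this
      rw [List.get_eq_getElem]
      congr 1
      simp [hij]
  rw [sum_A_eq (k ++ [a]) h e htr N, concat_sumF]
  refine Finset.sum_congr rfl fun n hn => ?_
  congr 1
  · rw [he, Fin.snoc_last]
  · rw [sum_A_eq k rfl (e ∘ Fin.castSucc) (fun i => by simp [he]) (n-1)]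


lemma harm_le (N : ℕ) : ∑ n ∈ Finset.Icc 1 N, (n:ℝ)⁻¹ ≤ 1 + Real.log N := by
  induction N with
  | zero => simp
  | succ N ih =>
    rw [Finset.sum_Icc_succ_top (by omega)]
    rcases Nat.eq_zero_or_pos N with hN | hN
    · subst hN; norm_num
    · have h1 : Real.log ((N:ℝ)/(N+1)) ≤ (N:ℝ)/(N+1) - 1 :=
        Real.log_le_sub_one_of_pos (by positivity)
      have h2 : Real.log ((N:ℝ)/(N+1)) = Real.log N - Real.log (N+1) :=
        Real.log_div (by positivity) (by positivity)
      have h3 : (N:ℝ)/(N+1) - 1 = -(1/(N+1)) := by field_simp; ring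
      have h4 : ((N+1:ℕ):ℝ)⁻¹ ≤ Real.log (N+1) - Real.log N := by
        push_cast; rw [inv_eq_one_div]; linarith
      push_cast at *
      linarith


lemma H'_nonneg : ∀ (ρ : List ℕ+) (N : ℕ), 0 ≤ H' N ρ
  | [], _ => zero_le_one
  | a :: ρ, N => by
    rw [H']
    refine Finset.sum_nonneg fun n _ => mul_nonneg (by positivity) (H'_nonneg ρ _)

lemma log_mono_nat {m N : ℕ} (h : m ≤ N) : Real.log m ≤ Real.log N := by
  rcases Nat.eq_zero_or_pos m with hm | hm
  · subst hm
    simpa using Real.log_natCast_nonneg N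
  · exact Real.log_le_log (by positivity) (by exact_mod_cast h)

lemma H'_le : ∀ (ρ : List ℕ+) (N : ℕ), H' N ρ ≤ (1 + Real.log N) ^ ρ.length
  | [], N => by simp [H']
  | a :: ρ, N => by
    rcases Nat.eq_zero_or_pos N with hN | hN
    · subst hN
      rw [H']
      simp [H'_nonneg]
    have hlogN : (0:ℝ) ≤ Real.log N := Real.log_natCast_nonneg N
    rw [H']
    calc ∑ n ∈ Finset.Icc 1 N, ((n:ℝ) ^ (a:ℕ))⁻¹ * H' (n-1) ρ
        ≤ ∑ n ∈ Finset.Icc 1 N, (n:ℝ)⁻¹ * (1 + Real.log N) ^ ρ.length := by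
          refine Finset.sum_le_sum fun n hn => ?_
          simp only [Finset.mem_Icc] at hn
          have hn1 : (1:ℝ) ≤ (n:ℝ) := by exact_mod_cast hn.1
          refine mul_le_mul ?_ ?_ (H'_nonneg ρ _) (by positivity)
          · rw [inv_le_inv₀ (by positivity) (by positivity)]
            calc (n:ℝ) = (n:ℝ)^1 := (pow_one _).symm
            _ ≤ (n:ℝ)^(a:ℕ) := pow_le_pow_right₀ hn1 a.one_le
          · calc H' (n-1) ρ ≤ (1 + Real.log ((n-1:ℕ):ℝ)) ^ ρ.length := H'_le ρ _
            _ ≤ (1 + Real.log N) ^ ρ.length := by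
                have : Real.log ((n-1 : ℕ)) ≤ Real.log N := log_mono_nat (by omega)
                have h0 : (0:ℝ) ≤ 1 + Real.log ((n-1:ℕ)) := by
                  have := Real.log_natCast_nonneg (n-1); linarith
                exact pow_le_pow_left₀ h0 (by linarith) _
      _ = (∑ n ∈ Finset.Icc 1 N, (n:ℝ)⁻¹) * (1 + Real.log N) ^ ρ.length := by
          rw [← Finset.sum_mul]
      _ ≤ (1 + Real.log N) * (1 + Real.log N) ^ ρ.length := by
          refine mul_le_mul_of_nonneg_right (harm_le N) (by positivity)
      _ = (1 + Real.log N) ^ (a :: ρ).length := by rw [List.length_cons, pow_succ]; ring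


lemma log_le_c_rpow {c : ℝ} (hc : 0 < c) {n : ℕ} (hn : 1 ≤ n) :
    Real.log n ≤ c * (n:ℝ) ^ (c⁻¹ : ℝ) := by
  have hn0 : (0:ℝ) < n := by exact_mod_cast hn
  have h1 : Real.log ((n:ℝ) ^ (c⁻¹ : ℝ)) = c⁻¹ * Real.log n := Real.log_rpow hn0 _
  have h2 : Real.log ((n:ℝ) ^ (c⁻¹ : ℝ)) ≤ (n:ℝ) ^ (c⁻¹ : ℝ) - 1 :=
    Real.log_le_sub_one_of_pos (Real.rpow_pos_of_pos hn0 _)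
  have h3 : Real.log n = c * Real.log ((n:ℝ) ^ (c⁻¹ : ℝ)) := by
    rw [h1]; field_simp
  rw [h3]
  have h4 : (n:ℝ) ^ (c⁻¹ : ℝ) - 1 ≤ (n:ℝ) ^ (c⁻¹ : ℝ) := by linarith
  nlinarith [Real.rpow_pos_of_pos hn0 (c⁻¹ : ℝ)]

lemma one_add_log_pow_le (r : ℕ) {n : ℕ} (hn : 1 ≤ n) :
    (1 + Real.log n) ^ r ≤ ((2*(r:ℝ)+3)) ^ r * (n:ℝ) ^ ((1:ℝ)/2) := by
  have hn0 : (0:ℝ) < n := by exact_mod_cast hn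
  have hn1 : (1:ℝ) ≤ n := by exact_mod_cast hn
  set c : ℝ := 2*(r:ℝ)+2 with hcdef
  have hc : (0:ℝ) < c := by positivity
  have hrpow1 : (1:ℝ) ≤ (n:ℝ) ^ (c⁻¹ : ℝ) := Real.one_le_rpow hn1 (by positivity)
  have key : 1 + Real.log n ≤ (2*(r:ℝ)+3) * (n:ℝ) ^ (c⁻¹ : ℝ) := by
    have := log_le_c_rpow hc hn
    calc 1 + Real.log n ≤ 1 + c * (n:ℝ) ^ (c⁻¹ : ℝ) := by linarith
    _ ≤ (1 + c) * (n:ℝ) ^ (c⁻¹ : ℝ) := by nlinarith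
    _ = (2*(r:ℝ)+3) * (n:ℝ) ^ (c⁻¹ : ℝ) := by rw [hcdef]; ring
  have h0 : (0:ℝ) ≤ 1 + Real.log n := by
    have := Real.log_natCast_nonneg n; linarith
  calc (1 + Real.log n) ^ r ≤ ((2*(r:ℝ)+3) * (n:ℝ) ^ (c⁻¹ : ℝ)) ^ r :=
        pow_le_pow_left₀ h0 key r
  _ = (2*(r:ℝ)+3) ^ r * ((n:ℝ) ^ (c⁻¹ : ℝ)) ^ r := mul_pow _ _ _
  _ = (2*(r:ℝ)+3) ^ r * (n:ℝ) ^ ((c⁻¹ : ℝ) * r) := by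
        rw [← Real.rpow_natCast ((n:ℝ) ^ (c⁻¹ : ℝ)) r, ← Real.rpow_mul (le_of_lt hn0)]
  _ ≤ (2*(r:ℝ)+3) ^ r * (n:ℝ) ^ ((1:ℝ)/2) := by
        refine mul_le_mul_of_nonneg_left ?_ (by positivity)
        refine Real.rpow_le_rpow_of_exponent_le hn1 ?_
        rw [hcdef]
        have hr0 : (0:ℝ) ≤ (r:ℝ) := by positivity
        rw [inv_mul_le_iff₀ (by positivity)]
        nlinarith





lemma Hl_nonneg (N : ℕ) (k : List ℕ+) : 0 ≤ Hl N k := H'_nonneg _ _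

lemma Hl_le (N : ℕ) (k : List ℕ+) : Hl N k ≤ (1 + Real.log N) ^ k.length := by
  have := H'_le k.reverse N
  rwa [List.length_reverse] at this

def T : ℝ := ∑' n : ℕ, (((n:ℝ)) ^ ((3:ℝ)/2))⁻¹

lemma summable_T : Summable (fun n : ℕ => (((n:ℝ)) ^ ((3:ℝ)/2))⁻¹) :=
  Real.summable_nat_rpow_inv.2 (by norm_num)

lemma Hl_concat_bound (K : List ℕ+) (a : ℕ+) (ha : 2 ≤ (a:ℕ)) (N : ℕ) :
    Hl N (K ++ [a]) ≤ (2*(K.length:ℝ)+3) ^ K.length * T := by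
  set r := K.length
  rw [Hl_concat]
  calc ∑ n ∈ Finset.Icc 1 N, ((n:ℝ) ^ (a:ℕ))⁻¹ * Hl (n-1) K
      ≤ ∑ n ∈ Finset.Icc 1 N, (2*(r:ℝ)+3) ^ r * (((n:ℝ)) ^ ((3:ℝ)/2))⁻¹ := by
        refine Finset.sum_le_sum fun n hn => ?_
        simp only [Finset.mem_Icc] at hn
        have hn1 : 1 ≤ n := hn.1
        have hn0 : (0:ℝ) < n := by exact_mod_cast hn1
        have hnR1 : (1:ℝ) ≤ (n:ℝ) := by exact_mod_cast hn1
        have h1 : ((n:ℝ) ^ (a:ℕ))⁻¹ ≤ ((n:ℝ) ^ (2:ℕ))⁻¹ := by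
          rw [inv_le_inv₀ (by positivity) (by positivity)]
          exact pow_le_pow_right₀ hnR1 ha
        have h2 : Hl (n-1) K ≤ (2*(r:ℝ)+3) ^ r * (n:ℝ) ^ ((1:ℝ)/2) := by
          calc Hl (n-1) K ≤ (1 + Real.log ((n-1:ℕ):ℝ)) ^ r := Hl_le _ _
          _ ≤ (1 + Real.log (n:ℝ)) ^ r := by
              have hm : Real.log ((n-1:ℕ):ℝ) ≤ Real.log (n:ℝ) := by
                have := @log_mono_nat (n-1) n (by omega)
                simpa using this
              have h0 : (0:ℝ) ≤ 1 + Real.log ((n-1:ℕ):ℝ) := by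
                have := Real.log_natCast_nonneg (n-1); linarith
              exact pow_le_pow_left₀ h0 (by linarith) _
          _ ≤ (2*(r:ℝ)+3) ^ r * (n:ℝ) ^ ((1:ℝ)/2) := one_add_log_pow_le r hn1
        calc ((n:ℝ) ^ (a:ℕ))⁻¹ * Hl (n-1) K
            ≤ ((n:ℝ) ^ (2:ℕ))⁻¹ * ((2*(r:ℝ)+3) ^ r * (n:ℝ) ^ ((1:ℝ)/2)) :=
              mul_le_mul h1 h2 (Hl_nonneg _ _) (by positivity)
        _ = (2*(r:ℝ)+3) ^ r * (((n:ℝ)) ^ ((3:ℝ)/2))⁻¹ := by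
              rw [← Real.rpow_natCast (n:ℝ) 2]
              rw [← Real.rpow_neg (le_of_lt hn0), ← Real.rpow_neg (le_of_lt hn0)]
              push_cast
              rw [mul_comm, mul_assoc, ← Real.rpow_add hn0]
              norm_num
    _ = (2*(r:ℝ)+3) ^ r * ∑ n ∈ Finset.Icc 1 N, (((n:ℝ)) ^ ((3:ℝ)/2))⁻¹ := by
        rw [Finset.mul_sum]
    _ ≤ (2*(r:ℝ)+3) ^ r * T := by
        refine mul_le_mul_of_nonneg_left ?_ (by positivity)
        exact Summable.sum_le_tsum _ (fun n _ => by positivity) summable_T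


lemma g_nonneg (k : List ℕ+) (f : Fin k.length → ℕ) : 0 ≤ g k f :=
  Finset.prod_nonneg fun i _ => by positivity

lemma Hl_eq_sum : ∀ (k : List ℕ+) (N : ℕ), Hl N k = ∑ f ∈ A k N, g k f := by
  intro k
  induction k using List.reverseRecOn with
  | nil =>
    intro N
    rw [Hl_nil]
    have h1 : ∀ f ∈ A ([]:List ℕ+) N, g [] f = 1 := by
      intro f _
      rw [g]
      exact Finset.prod_eq_one fun i _ => absurd i.isLt (by simp)
    rw [Finset.sum_congr rfl h1, Finset.sum_const]
    have hcard : (A ([]:List ℕ+) N).card = 1 := by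
      refine Finset.card_eq_one.2 ⟨(fun i => absurd i.isLt (by simp) : Fin ([]:List ℕ+).length → ℕ), ?_⟩
      ext f
      simp only [Finset.mem_singleton]
      constructor
      · intro _
        funext i
        exact absurd i.isLt (by simp)
      · rintro rfl
        exact mem_A.2 ⟨fun i => absurd i.isLt (by simp), fun i j h => absurd i.isLt (by simp)⟩
    rw [hcard]
    simp
  | append_singleton K a ih =>
    intro N
    rw [Hl_concat, concat_sum]
    exact Finset.sum_congr rfl fun n _ => by rw [ih]

abbrev S (k : List ℕ+) := {f : Fin k.length → ℕ // StrictMono f ∧ ∀ i, 0 < f i}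

def AS (k : List ℕ+) (N : ℕ) : Finset (S k) :=
  (A k N).subtype _

lemma mem_AS {k : List ℕ+} {N : ℕ} {x : S k} : x ∈ AS k N ↔ x.1 ∈ A k N := by
  simp [AS]

lemma sum_AS (k : List ℕ+) (N : ℕ) : ∑ x ∈ AS k N, g k x.1 = Hl N k := by
  rw [Hl_eq_sum, AS]
  refine Finset.sum_subtype_of_mem _ fun f hf => ?_
  rcases mem_A.1 hf with ⟨hmem, hsm⟩
  exact ⟨hsm, fun i => (hmem i).1⟩

lemma exists_bound (k : List ℕ+) (hk : Admissible k) : ∃ C : ℝ, ∀ N, Hl N k ≤ C := by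
  rcases List.eq_nil_or_concat k with rfl | ⟨K, a, rfl⟩
  · exact ⟨1, fun N => le_of_eq (Hl_nil N)⟩
  · rw [List.concat_eq_append] at hk ⊢
    have ha : 2 ≤ (a:ℕ) := by
      have := hk a (by simp)
      exact_mod_cast this
    exact ⟨_, fun N => Hl_concat_bound K a ha N⟩

lemma summable_g (k : List ℕ+) (hk : Admissible k) :
    Summable (fun x : S k => g k x.1) := by
  obtain ⟨C, hC⟩ := exists_bound k hk
  refine summable_of_sum_le (c := C) (fun x => g_nonneg k x.1) fun u => ?_
  set N : ℕ := u.sup fun x => Finset.univ.sup x.1 with hN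
  have hsub : u ⊆ AS k N := by
    intro x hx
    rw [mem_AS]
    refine mem_A.2 ⟨fun i => ⟨x.2.2 i, ?_⟩, x.2.1⟩
    calc x.1 i ≤ Finset.univ.sup x.1 := Finset.le_sup (Finset.mem_univ i)
    _ ≤ N := Finset.le_sup (f := fun x : S k => Finset.univ.sup x.1) hx
  calc ∑ x ∈ u, g k x.1 ≤ ∑ x ∈ AS k N, g k x.1 :=
        Finset.sum_le_sum_of_subset_of_nonneg hsub fun x _ _ => g_nonneg k x.1
  _ = Hl N k := sum_AS k N
  _ ≤ C := hC N

lemma mzv_transport (m : List ℕ) {r : ℕ} (h : m.length = r) (e : Fin r → ℕ)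
    (he : ∀ i : Fin m.length, m.get i = e (Fin.cast h i)) :
    mzv m = ∑' x : {f : Fin r → ℕ // StrictMono f ∧ ∀ i, 0 < f i},
      ∏ i, ((x.1 i : ℝ) ^ e i)⁻¹ := by
  subst h
  rw [mzv]
  exact tsum_congr fun x => Finset.prod_congr rfl fun i _ => by rw [he i]; rfl

lemma mzvP_eq (k : List ℕ+) : mzvP k = ∑' x : S k, g k x.1 := by
  have hco : (k.map fun a => (a : ℕ)) = k.map (fun a : ℕ+ => (a:ℕ)) := by
    induction k with
    | nil => rfl
    | cons a t ih =>
      simp only [List.map_cons] at *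
      show List.map _ (List.flatMap _ _) = _
      rw [List.flatMap_cons]
      simp only [List.map_append]
      rw [← ih]
      rfl
  rw [mzvP, hco]
  have h : (k.map fun a : ℕ+ => (a:ℕ)).length = k.length := List.length_map _
  rw [mzv_transport _ h (fun i => (k.get i : ℕ)) ?_]
  · rfl
  · intro i
    simp [List.get_eq_getElem]

lemma tendsto_Hl (k : List ℕ+) (hk : Admissible k) :
    Filter.Tendsto (fun N => Hl N k) Filter.atTop (nhds (mzvP k)) := by
  have hs := summable_g k hk
  have hh : HasSum (fun x : S k => g k x.1) (mzvP k) := (mzvP_eq k) ▸ hs.hasSum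
  have hmono : Monotone (fun N => AS k N) := by
    intro N M hNM
    intro x hx
    rw [mem_AS] at hx ⊢
    rcases mem_A.1 hx with ⟨hmem, hsm⟩
    exact mem_A.2 ⟨fun i => ⟨(hmem i).1, le_trans (hmem i).2 hNM⟩, hsm⟩
  have hexh : ∀ x : S k, ∃ N, x ∈ AS k N := by
    intro x
    refine ⟨Finset.univ.sup x.1, ?_⟩
    rw [mem_AS]
    exact mem_A.2 ⟨fun i => ⟨x.2.2 i, Finset.le_sup (Finset.mem_univ i)⟩, x.2.1⟩
  have hT := hh.comp (Filter.tendsto_atTop_finset_of_monotone hmono hexh)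
  have : (fun N => Hl N k) = (fun s : Finset (S k) => ∑ x ∈ s, g k x.1) ∘ fun N => AS k N := by
    funext N
    exact (sum_AS k N).symm
  rw [this]
  exact hT

lemma triple_split (N : ℕ) (F G : ℕ → ℝ) :
    (∑ m ∈ Finset.Icc 1 N, F m) * (∑ n ∈ Finset.Icc 1 N, G n)
      = ∑ n ∈ Finset.Icc 1 N, (∑ m ∈ Finset.Icc 1 (n-1), F m) * G n
      + ∑ m ∈ Finset.Icc 1 N, F m * (∑ n ∈ Finset.Icc 1 (m-1), G n)
      + ∑ n ∈ Finset.Icc 1 N, F n * G n := by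
  induction N with
  | zero => simp
  | succ N ih =>
    rw [Finset.sum_Icc_succ_top (by omega : 1 ≤ N+1) F,
        Finset.sum_Icc_succ_top (by omega : 1 ≤ N+1) G,
        Finset.sum_Icc_succ_top (by omega : 1 ≤ N+1) (fun n => (∑ m ∈ Finset.Icc 1 (n-1), F m) * G n),
        Finset.sum_Icc_succ_top (by omega : 1 ≤ N+1) (fun m => F m * (∑ n ∈ Finset.Icc 1 (m-1), G n)),
        Finset.sum_Icc_succ_top (by omega : 1 ≤ N+1) (fun n => F n * G n)]
    have hsub : N + 1 - 1 = N := by omega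
    rw [hsub]
    nlinarith [ih]

lemma sum_swap_concat (X : R) (c : ℕ+) (N : ℕ) :
    (X.sum fun m q => (q:ℝ) * Hl N (m ++ [c]))
      = ∑ n ∈ Finset.Icc 1 N, ((n:ℝ)^(c:ℕ))⁻¹ * (X.sum fun m q => (q:ℝ) * Hl (n-1) m) := by
  rw [Finsupp.sum]
  simp_rw [Hl_concat, Finset.mul_sum]
  rw [Finset.sum_comm]
  simp_rw [Finsupp.sum, Finset.mul_sum]
  refine Finset.sum_congr rfl fun n _ => Finset.sum_congr rfl fun m _ => by ring

lemma hzero : ∀ m : List ℕ+, ∀ N : ℕ, ((0:ℚ):ℝ) * Hl N m = 0 := by intros; simp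

lemma finite_stuffle (mul : R →ₗ[ℚ] R →ₗ[ℚ] R)
    (hOneL : ∀ l : List ℕ+, mul (δ []) (δ l) = δ l)
    (hOneR : ∀ k : List ℕ+, mul (δ k) (δ []) = δ k)
    (hRec : ∀ (k l : List ℕ+) (a b : ℕ+),
      mul (δ (k ++ [a])) (δ (l ++ [b])) =
        appendOp b (mul (δ (k ++ [a])) (δ l))
        + appendOp a (mul (δ k) (δ (l ++ [b])))
        + appendOp (a + b) (mul (δ k) (δ l))) :
    ∀ (n : ℕ) (k l : List ℕ+), k.length + l.length = n → ∀ N : ℕ,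
      ((mul (δ k) (δ l)).sum fun m c => (c:ℝ) * Hl N m) = Hl N k * Hl N l := by
  intro n
  induction n using Nat.strong_induction_on with
  | _ n ih =>
    intro k l hn N
    rcases List.eq_nil_or_concat k with rfl | ⟨K, a, rfl⟩
    · rw [hOneL, δ, Finsupp.sum_single_index (by simp), Hl_nil]
      push_cast
      ring
    rcases List.eq_nil_or_concat l with rfl | ⟨L, b, rfl⟩
    · rw [hOneR, δ, Finsupp.sum_single_index (by simp), Hl_nil]
      push_cast
      ring
    simp only [List.concat_eq_append] at hn ⊢
    have hadd : ∀ (m : List ℕ+) (q₁ q₂ : ℚ),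
        ((q₁ + q₂ : ℚ):ℝ) * Hl N m = (q₁:ℝ) * Hl N m + (q₂:ℝ) * Hl N m := by
      intros; push_cast; ring
    rw [hRec K L a b]
    rw [Finsupp.sum_add_index' (fun m => by simp) hadd]
    rw [Finsupp.sum_add_index' (fun m => by simp) hadd]
    have hmap : ∀ (c : ℕ+) (X : R),
        ((appendOp c X).sum fun m q => (q:ℝ) * Hl N m)
          = X.sum fun m q => (q:ℝ) * Hl N (m ++ [c]) := by
      intro c X
      rw [appendOp, Finsupp.lmapDomain_apply]
      exact Finsupp.sum_mapDomain_index (fun m => by simp)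
        (fun m q₁ q₂ => by push_cast; ring)
    rw [hmap, hmap, hmap]
    rw [sum_swap_concat, sum_swap_concat, sum_swap_concat]
    have ih1 : ∀ n' ∈ Finset.Icc 1 N,
        ((mul (δ (K ++ [a])) (δ L)).sum fun m c => (c:ℝ) * Hl (n'-1) m)
          = Hl (n'-1) (K ++ [a]) * Hl (n'-1) L := by
      intro n' _
      refine ih (n-1) (by simp at hn; omega) (K ++ [a]) L (by simp at hn ⊢; omega) (n'-1)
    have ih2 : ∀ n' ∈ Finset.Icc 1 N,
        ((mul (δ K) (δ (L ++ [b]))).sum fun m c => (c:ℝ) * Hl (n'-1) m)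
          = Hl (n'-1) K * Hl (n'-1) (L ++ [b]) := by
      intro n' _
      refine ih (n-1) (by simp at hn; omega) K (L ++ [b]) (by simp at hn ⊢; omega) (n'-1)
    have ih3 : ∀ n' ∈ Finset.Icc 1 N,
        ((mul (δ K) (δ L)).sum fun m c => (c:ℝ) * Hl (n'-1) m)
          = Hl (n'-1) K * Hl (n'-1) L := by
      intro n' _
      refine ih (n-2) (by simp at hn; omega) K L (by simp at hn ⊢; omega) (n'-1)
    have e1 : (∑ n' ∈ Finset.Icc 1 N, ((n':ℝ)^(b:ℕ))⁻¹ *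
          (((mul (δ (K ++ [a]))) (δ L)).sum fun m c => (c:ℝ) * Hl (n'-1) m))
        = ∑ n' ∈ Finset.Icc 1 N,
            (∑ m ∈ Finset.Icc 1 (n'-1), ((m:ℝ)^(a:ℕ))⁻¹ * Hl (m-1) K) *
              (((n':ℝ)^(b:ℕ))⁻¹ * Hl (n'-1) L) := by
      refine Finset.sum_congr rfl fun n' hn' => ?_
      rw [ih1 n' hn', Hl_concat]
      ring
    have e2 : (∑ n' ∈ Finset.Icc 1 N, ((n':ℝ)^(a:ℕ))⁻¹ *
          (((mul (δ K)) (δ (L ++ [b]))).sum fun m c => (c:ℝ) * Hl (n'-1) m))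
        = ∑ n' ∈ Finset.Icc 1 N,
            (((n':ℝ)^(a:ℕ))⁻¹ * Hl (n'-1) K) *
              (∑ m ∈ Finset.Icc 1 (n'-1), ((m:ℝ)^(b:ℕ))⁻¹ * Hl (m-1) L) := by
      refine Finset.sum_congr rfl fun n' hn' => ?_
      rw [ih2 n' hn', Hl_concat]
      ring
    have e3 : (∑ n' ∈ Finset.Icc 1 N, ((n':ℝ)^(((a+b):ℕ+):ℕ))⁻¹ *
          (((mul (δ K)) (δ L)).sum fun m c => (c:ℝ) * Hl (n'-1) m))
        = ∑ n' ∈ Finset.Icc 1 N,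
            (((n':ℝ)^(a:ℕ))⁻¹ * Hl (n'-1) K) * (((n':ℝ)^(b:ℕ))⁻¹ * Hl (n'-1) L) := by
      refine Finset.sum_congr rfl fun n' hn' => ?_
      rw [ih3 n' hn']
      have hab : ((((a+b):ℕ+):ℕ)) = (a:ℕ) + (b:ℕ) := by
        push_cast
        ring
      rw [hab, pow_add, mul_inv]
      ring
    rw [e1, e2, e3, Hl_concat N K a, Hl_concat N L b,
      triple_split N (fun m => ((m:ℝ)^(a:ℕ))⁻¹ * Hl (m-1) K)
        (fun n' => ((n':ℝ)^(b:ℕ))⁻¹ * Hl (n'-1) L)]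

end S13

open S13 in
theorem stmt_13
    (mul : R →ₗ[ℚ] R →ₗ[ℚ] R)
    (hOneL : ∀ l : List ℕ+, mul (δ []) (δ l) = δ l)
    (hOneR : ∀ k : List ℕ+, mul (δ k) (δ []) = δ k)
    (hRec : ∀ (k l : List ℕ+) (a b : ℕ+),
      mul (δ (k ++ [a])) (δ (l ++ [b])) =
        appendOp b (mul (δ (k ++ [a])) (δ l))
        + appendOp a (mul (δ k) (δ (l ++ [b])))
        + appendOp (a + b) (mul (δ k) (δ l))) :
    ∀ k l : List ℕ+, Admissible k → Admissible l →
      (∀ m ∈ (mul (δ k) (δ l)).support, Admissible m) ∧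
      ((mul (δ k) (δ l)).sum fun m c => c * mzvP m) = mzvP k * mzvP l := by
  intro k l hk hl
  have hsupp : ∀ m ∈ (mul (δ k) (δ l)).support, Admissible m := by
    rcases List.eq_nil_or_concat k with rfl | ⟨K, a, rfl⟩
    · rw [hOneL]
      intro m hm
      have := Finsupp.support_single_subset hm
      simp only [Finset.mem_singleton] at this
      subst this
      exact hl
    rcases List.eq_nil_or_concat l with rfl | ⟨L, b, rfl⟩
    · rw [hOneR]
      intro m hm
      have := Finsupp.support_single_subset hm
      simp only [Finset.mem_singleton] at this
      subst this
      exact hk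
    simp only [List.concat_eq_append] at hk hl ⊢
    have ha : (2:ℕ+) ≤ a := hk a (by simp)
    have hb : (2:ℕ+) ≤ b := hl b (by simp)
    rw [hRec K L a b]
    intro m hm
    have h1 := Finsupp.support_add (g₁ := appendOp b (mul (δ (K ++ [a])) (δ L))
        + appendOp a (mul (δ K) (δ (L ++ [b])))) (g₂ := appendOp (a+b) (mul (δ K) (δ L))) hm
    have key : ∀ (c : ℕ+) (X : R), (2:ℕ+) ≤ c →
        ∀ m' ∈ (appendOp c X).support, Admissible m' := by
      intro c X hc m' hm'
      rw [appendOp, Finsupp.lmapDomain_apply] at hm'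
      have := Finsupp.mapDomain_support hm'
      rw [Finset.mem_image] at this
      obtain ⟨m'', _, rfl⟩ := this
      intro e he
      rw [List.getLast?_append] at he
      · simp at he
        subst he
        exact hc
    rw [Finset.mem_union] at h1
    rcases h1 with h1 | h1
    · have h2 := Finsupp.support_add (g₁ := appendOp b (mul (δ (K ++ [a])) (δ L)))
        (g₂ := appendOp a (mul (δ K) (δ (L ++ [b])))) h1
      rw [Finset.mem_union] at h2
      rcases h2 with h2 | h2
      · exact key b _ hb m h2
      · exact key a _ ha m h2
    · refine key (a+b) _ ?_ m h1
      have h2 : (2:ℕ) ≤ ((a+b : ℕ+):ℕ) := by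
        have := a.pos
        have := b.pos
        rw [PNat.add_coe]
        omega
      exact_mod_cast h2
  refine ⟨hsupp, ?_⟩
  have h1 : Filter.Tendsto (fun N => (mul (δ k) (δ l)).sum fun m c => (c:ℝ) * Hl N m)
      Filter.atTop (nhds ((mul (δ k) (δ l)).sum fun m c => (c:ℝ) * mzvP m)) := by
    unfold Finsupp.sum
    refine tendsto_finset_sum _ fun m hm => ?_
    exact (tendsto_Hl m (hsupp m hm)).const_mul _
  have h2 : Filter.Tendsto (fun N => Hl N k * Hl N l)
      Filter.atTop (nhds (mzvP k * mzvP l)) :=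
    (tendsto_Hl k hk).mul (tendsto_Hl l hl)
  have h3 : (fun N => (mul (δ k) (δ l)).sum fun m c => (c:ℝ) * Hl N m)
      = fun N => Hl N k * Hl N l := by
    funext N
    exact finite_stuffle mul hOneL hOneR hRec (k.length + l.length) k l rfl N
  rw [h3] at h1
  exact tendsto_nhds_unique h1 h2
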